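/- Assume each f_i is μ-convex with μ ≥ 8δ, the family {f_i} has δ-SOD with δ > 0, and set λ = 2δ. Suppose the Acc-S-DANE iterates (with full participation) satisfy, for every round r ≥ 0, the accuracy condition Σ_{i=1}^n ‖∇F_{i,r}(x_{i,r+1})‖² ≤ δ² Σ_{i=1}^n ‖x_{i,r+1} − y^r‖². Let x* be a minimizer of f and D := ‖x⁰ − x*‖. Then for every R ≥ 1: f(x^R) − f(x*) ≤ 4δD² / (1 + √(μ/(8δ)))^{2R−2}. -/

import Mathlib

open Finset RealInnerProductSpace

private lemma young_ineq {E : Type*} [NormedAddCommGroup E] [InnerProductSpace ℝ E]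
    (u w : E) (d : ℝ) (hd : 0 < d) : ⟪u, w⟫ ≤ (1/(2*d)) * ‖u‖^2 + (d/2) * ‖w‖^2 := by
  have h := norm_sub_sq_real u (d • w)
  rw [norm_smul, real_inner_smul_right] at h
  simp [abs_of_pos hd] at h
  have key : 2*d*⟪u, w⟫ ≤ ‖u‖^2 + d^2 * ‖w‖^2 := by nlinarith [sq_nonneg ‖u - d•w‖]
  have h4 : ⟪u, w⟫ = (2*d*⟪u, w⟫)/(2*d) := by field_simp
  have h6 : (1/(2*d)*‖u‖^2 + d/2*‖w‖^2)*(2*d) = ‖u‖^2 + d^2*‖w‖^2 := by field_simp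
  rw [h4, div_le_iff₀ (by positivity : (0:ℝ) < 2*d)]
  linarith [key, h6]

private lemma quad_lower {E : Type*} [NormedAddCommGroup E] [InnerProductSpace ℝ E]
    (e q : E) (d : ℝ) (hd : 0 < d) : -((1/(2*d)) * ‖e‖^2) ≤ ⟪e, q⟫ + (d/2) * ‖q‖^2 := by
  have h := norm_add_sq_real e (d • q)
  rw [norm_smul, real_inner_smul_right] at h
  simp [abs_of_pos hd] at h
  have key : -(‖e‖^2 + d^2 * ‖q‖^2) ≤ 2*d*⟪e, q⟫ := by nlinarith [sq_nonneg ‖e + d•q‖]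
  have h4 : ⟪e, q⟫ = (2*d*⟪e, q⟫)/(2*d) := by field_simp
  have h6 : ((1/(2*d))*‖e‖^2)*(2*d) = ‖e‖^2 := by field_simp
  have h7 : ((d/2)*‖q‖^2)*(2*d) = d^2*‖q‖^2 := by ring
  nlinarith [key, h6, h7, mul_pos hd hd]

set_option maxHeartbeats 1600000 in
theorem acc_sdane_full_participation_large_mu
    {E : Type*} [NormedAddCommGroup E] [InnerProductSpace ℝ E] [CompleteSpace E]
    (n : ℕ) (hn : 0 < n)
    (f' : Fin n → E → ℝ) (hdiff : ∀ i, Differentiable ℝ (f' i))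
    (f : E → ℝ) (hfdef : f = fun x => (1 / (n : ℝ)) * ∑ i, f' i x)
    (μ : ℝ) (hμ : 0 ≤ μ)
    (hconv : ∀ i, ∀ x y : E,
      f' i y ≥ f' i x + ⟪gradient (f' i) x, y - x⟫ + (μ / 2) * ‖x - y‖ ^ 2)
    (δ : ℝ) (hδ : 0 < δ) (hμδ : 8 * δ ≤ μ)
    (hSOD : ∀ x y : E,
      (1 / (n : ℝ)) * ∑ i, ‖gradient (fun z => f z - f' i z) x
          - gradient (fun z => f z - f' i z) y‖ ^ 2 ≤ δ ^ 2 * ‖x - y‖ ^ 2)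
    (lam : ℝ) (hlam : lam = 2 * δ)
    (x v y : ℕ → E) (xi : Fin n → ℕ → E) (A B a : ℕ → ℝ)
    (hA0 : A 0 = 0) (hB0 : B 0 = 1) (hv0 : v 0 = x 0)
    (ha : ∀ r, 0 < a (r + 1))
    (haeq : ∀ r, lam * a (r + 1) ^ 2 = (A r + a (r + 1)) * B r)
    (hArec : ∀ r, A (r + 1) = A r + a (r + 1))
    (hBrec : ∀ r, B (r + 1) = B r + μ * a (r + 1))
    (hy : ∀ r, y r = (A (r + 1))⁻¹ • (A r • x r + a (r + 1) • v r))
    (hxrec : ∀ r, x (r + 1) = (1 / (n : ℝ)) • ∑ i, xi i r)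
    (hvrec : ∀ r, v (r + 1) = (B (r + 1))⁻¹ •
      (B r • v r + (a (r + 1) * μ) • x (r + 1)
        - a (r + 1) • ((1 / (n : ℝ)) • ∑ i, gradient (f' i) (xi i r))))
    (hacc : ∀ r, ∑ i, ‖gradient (f' i) (xi i r) + gradient f (y r)
          - gradient (f' i) (y r) + lam • (xi i r - y r)‖ ^ 2
      ≤ δ ^ 2 * ∑ i, ‖xi i r - y r‖ ^ 2)
    (xstar : E) (hstar : ∀ z, f xstar ≤ f z)
    (D : ℝ) (hD : D = ‖x 0 - xstar‖) :
    ∀ R : ℕ, 1 ≤ R →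
      f (x R) - f xstar ≤
        4 * δ * D ^ 2 / (1 + Real.sqrt (μ / (8 * δ))) ^ (2 * R - 2) := by
  subst hlam
  have hN : (0:ℝ) < (n:ℝ) := by exact_mod_cast hn
  have hNne : ((n:ℝ)) ≠ 0 := ne_of_gt hN
  -- differentiability of f and of sums
  have hdsum : ∀ w : E, DifferentiableAt ℝ (fun z => ∑ i, f' i z) w :=
    fun w => DifferentiableAt.fun_sum (fun i _ => (hdiff i).differentiableAt)
  have hdf : Differentiable ℝ f := by
    rw [hfdef]; exact fun w => (hdsum w).const_mul _
  -- gradient of f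
  have hgradf : ∀ w, gradient f w = (1 / (n : ℝ)) • ∑ i, gradient (f' i) w := by
    intro w
    have h1 : fderiv ℝ f w = (1 / (n : ℝ)) • ∑ i, fderiv ℝ (f' i) w := by
      rw [hfdef, fderiv_const_mul (hdsum w)]
      congr 1
      exact fderiv_fun_sum (fun i _ => (hdiff i).differentiableAt)
    rw [gradient, h1, map_smul, map_sum]; rfl
  -- gradient of h i = f - f' i
  have hgradh : ∀ (i : Fin n) (w : E),
      gradient (fun z => f z - f' i z) w = gradient f w - gradient (f' i) w := by
    intro i w
    have h1 : fderiv ℝ (fun z => f z - f' i z) w = fderiv ℝ f w - fderiv ℝ (f' i) w :=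
      fderiv_sub (hdf.differentiableAt) ((hdiff i).differentiableAt)
    rw [gradient, h1, map_sub]; rfl
  -- sum of gradients of f' equals n • gradient f
  have hsumg : ∀ w : E, ∑ i, gradient (f' i) w = (n:ℝ) • gradient f w := by
    intro w
    rw [hgradf w, smul_smul]
    rw [show (n:ℝ) * (1/(n:ℝ)) = 1 by field_simp, one_smul]
  have hsumH : ∀ w : E, ∑ i, (gradient f w - gradient (f' i) w) = (0:E) := by
    intro w
    rw [Finset.sum_sub_distrib, hsumg w, Finset.sum_const, card_univ, Fintype.card_fin,
      ← Nat.cast_smul_eq_nsmul ℝ, sub_self]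
  -- values of f
  have hfval : ∀ w, f w = (1 / (n : ℝ)) * ∑ i, f' i w := by
    intro w; rw [hfdef]
  -- A, B basics
  have hApos : ∀ r, 0 ≤ A r := by
    intro r
    induction r with
    | zero => rw [hA0]
    | succ k ih => rw [hArec k]; have := ha k; linarith
  have hApos' : ∀ r, 0 < A (r+1) := by
    intro r; rw [hArec r]; have := ha r; have := hApos r; linarith
  have hBA : ∀ r, B r = 1 + μ * A r := by
    intro r
    induction r with
    | zero => rw [hB0, hA0]; ring
    | succ k ih => rw [hBrec k, hArec k, ih]; ring
  have hBpos : ∀ r, 0 < B r := by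
    intro r; rw [hBA r]; have := hApos r; nlinarith
  
  have hcpos : (0:ℝ) < 1/(n:ℝ) := by positivity
  have hmul : (1/(n:ℝ))*(n:ℝ) = 1 := by field_simp
  -- ============ the per-round potential inequality ============
  have round : ∀ r, A (r+1) * f (x (r+1)) + B (r+1)/2 * ‖xstar - v (r+1)‖^2
      ≤ A r * f (x r) + a (r+1) * f xstar + B r/2 * ‖xstar - v r‖^2 := by
    intro r
    have haapos := ha r
    have hA1pos := hApos' r
    have hA0nn := hApos r
    have hB0pos := hBpos r
    have hB1pos := hBpos (r+1)
    have hyr := hy r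
    have hvr := hvrec r
    have hxr := hxrec r
    have haccr := hacc r
    have haeqr := haeq r
    have hA1eq := hArec r
    have hB1eq := hBrec r
    set X := x r with hXdef
    set X' := x (r+1) with hX'def
    set V := v r with hVdef
    set V' := v (r+1) with hV'def
    set Y := y r with hYdef
    set aa := a (r + 1) with haadef
    set A0 := A r with hA0def
    set A1 := A (r + 1) with hA1def
    set B0' := B r with hB0'def
    set B1' := B (r + 1) with hB1'def
    set w' := xstar - V' with hw'def
    set z := A1⁻¹ • (A0 • X + aa • V') with hzdef
    have hA1ne : A1 ≠ 0 := ne_of_gt hA1pos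
    have hB1ne : B1' ≠ 0 := ne_of_gt hB1pos
    have hzs : A1 • z = A0 • X + aa • V' := smul_inv_smul₀ hA1ne _
    have hYs : A1 • Y = A0 • X + aa • V := by rw [hyr]; exact smul_inv_smul₀ hA1ne _
    have hvec1 : A1 • (z - Y) = aa • (V' - V) := by
      rw [smul_sub, smul_sub, hzs, hYs]; abel
    have hnormzY : A1 * ‖z - Y‖ = aa * ‖V' - V‖ := by
      have h := congrArg norm hvec1
      rwa [norm_smul, norm_smul, Real.norm_of_nonneg hA1pos.le,
        Real.norm_of_nonneg haapos.le] at h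
    have hnormzY2 : A1^2 * ‖z - Y‖^2 = aa^2 * ‖V' - V‖^2 := by
      have h2 := congrArg (fun t : ℝ => t^2) hnormzY
      simpa [mul_pow] using h2
    have hPsum : (n:ℝ) • X' = ∑ i, xi i r := by
      rw [hxr, smul_smul, show (n:ℝ)*(1/(n:ℝ)) = 1 by field_simp, one_smul]
    have hzi : ∀ p : E, A1 • (z - p) = A0 • (X - p) + aa • (V' - p) := by
      intro p
      rw [smul_sub, hzs, smul_sub, smul_sub, hA1eq, add_smul]
      abel
    have haeqA1 : 2*δ*aa^2 = A1*B0' := by rw [hA1eq]; exact haeqr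
    have hV'vec : B1' • V' = B0' • V + (aa*μ) • X'
        - aa • ((1/(n:ℝ)) • ∑ i, gradient (f' i) (xi i r)) := by
      rw [hvr]; exact smul_inv_smul₀ hB1ne _
    -- ---------- KEY inequality ----------
    have Ka : ∑ i, f' i X' ≤ ∑ i, f' i (xi i r)
        - ∑ i, ⟪gradient (f' i) X', xi i r - X'⟫ := by
      have h := Finset.sum_le_sum (fun i (_ : i ∈ univ) => hconv i X' (xi i r))
      rw [Finset.sum_add_distrib, Finset.sum_add_distrib] at h
      have hnn : (0:ℝ) ≤ ∑ i, μ/2 * ‖X' - xi i r‖^2 := by positivity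
      linarith only [h, hnn]
    have Kb1 : ∑ i, ⟪gradient f X', xi i r - X'⟫ = 0 := by
      rw [← inner_sum, Finset.sum_sub_distrib, Finset.sum_const, card_univ,
        Fintype.card_fin, ← Nat.cast_smul_eq_nsmul ℝ, hPsum, sub_self, inner_zero_right]
    have Kb : ∑ i, ⟪gradient (f' i) X', xi i r - X'⟫
        = - ∑ i, ⟪gradient f X' - gradient (f' i) X', xi i r - X'⟫ := by
      have hper : ∀ i : Fin n, ⟪gradient (f' i) X', xi i r - X'⟫
          = ⟪gradient f X', xi i r - X'⟫
            - ⟪gradient f X' - gradient (f' i) X', xi i r - X'⟫ := by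
        intro i; rw [inner_sub_left]; ring
      rw [Finset.sum_congr rfl (fun i _ => hper i), Finset.sum_sub_distrib, Kb1, zero_sub]
    have Kc : ∑ i, ⟪gradient f X' - gradient (f' i) X', xi i r - X'⟫
        = ∑ i, ⟪(gradient f X' - gradient (f' i) X')
              - (gradient f Y - gradient (f' i) Y), xi i r - X'⟫
          + ∑ i, ⟪gradient f Y - gradient (f' i) Y, xi i r - X'⟫ := by
      rw [← Finset.sum_add_distrib]
      refine Finset.sum_congr rfl fun i _ => ?_
      rw [← inner_add_left]
      congr 1
      abel
    have Kd : ∑ i, ⟪gradient f Y - gradient (f' i) Y, xi i r - X'⟫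
        = ∑ i, ⟪gradient f Y - gradient (f' i) Y, xi i r⟫ := by
      have hper : ∀ i : Fin n, ⟪gradient f Y - gradient (f' i) Y, xi i r - X'⟫
          = ⟪gradient f Y - gradient (f' i) Y, xi i r⟫
            - ⟪gradient f Y - gradient (f' i) Y, X'⟫ := fun i => inner_sub_right _ _ _
      rw [Finset.sum_congr rfl (fun i _ => hper i), Finset.sum_sub_distrib,
        ← sum_inner, hsumH Y, inner_zero_left, sub_zero]
    have Ke : ∑ i, ⟪(gradient f X' - gradient (f' i) X')
            - (gradient f Y - gradient (f' i) Y), xi i r - X'⟫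
        ≤ (1/(2*δ)) * ∑ i, ‖(gradient f X' - gradient (f' i) X')
            - (gradient f Y - gradient (f' i) Y)‖^2
          + (δ/2) * ∑ i, ‖xi i r - X'‖^2 := by
      calc ∑ i, ⟪(gradient f X' - gradient (f' i) X')
            - (gradient f Y - gradient (f' i) Y), xi i r - X'⟫
          ≤ ∑ i, ((1/(2*δ)) * ‖(gradient f X' - gradient (f' i) X')
              - (gradient f Y - gradient (f' i) Y)‖^2 + (δ/2) * ‖xi i r - X'‖^2) :=
            Finset.sum_le_sum fun i _ => young_ineq _ _ δ hδ
        _ = _ := by rw [Finset.sum_add_distrib, ← Finset.mul_sum, ← Finset.mul_sum]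
    have Kf0 : ∑ i, ‖(gradient f X' - gradient (f' i) X')
        - (gradient f Y - gradient (f' i) Y)‖^2 ≤ (n:ℝ) * (δ^2 * ‖X' - Y‖^2) := by
      have hSODr := hSOD X' Y
      simp only [hgradh] at hSODr
      have h1 := mul_le_mul_of_nonneg_left hSODr hN.le
      have h2 : (n:ℝ) * ((1/(n:ℝ)) * ∑ i, ‖(gradient f X' - gradient (f' i) X')
          - (gradient f Y - gradient (f' i) Y)‖^2)
          = ∑ i, ‖(gradient f X' - gradient (f' i) X')
          - (gradient f Y - gradient (f' i) Y)‖^2 := by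
        field_simp
      rw [h2] at h1
      linarith only [h1]
    have Kf : (1/(2*δ)) * ∑ i, ‖(gradient f X' - gradient (f' i) X')
        - (gradient f Y - gradient (f' i) Y)‖^2 ≤ (δ/2) * ((n:ℝ) * ‖X' - Y‖^2) := by
      have h1 := mul_le_mul_of_nonneg_left Kf0 (by positivity : (0:ℝ) ≤ 1/(2*δ))
      have h2 : (1/(2*δ)) * ((n:ℝ) * (δ^2 * ‖X' - Y‖^2))
          = (δ/2) * ((n:ℝ) * ‖X' - Y‖^2) := by field_simp
      linarith only [h1, h2]
    have Kg0 : ∑ i, ‖xi i r - Y‖^2 = ∑ i, ‖xi i r - X'‖^2 + (n:ℝ) * ‖X' - Y‖^2 := by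
      have hper : ∀ i : Fin n, ‖xi i r - Y‖^2
          = ‖xi i r - X'‖^2 + 2*⟪xi i r - X', X' - Y⟫ + ‖X' - Y‖^2 := by
        intro i
        rw [show xi i r - Y = (xi i r - X') + (X' - Y) by abel, norm_add_sq_real]
      rw [Finset.sum_congr rfl (fun i _ => hper i), Finset.sum_add_distrib,
        Finset.sum_add_distrib]
      have hcross : ∑ i, ⟪xi i r - X', X' - Y⟫ = 0 := by
        rw [← sum_inner, Finset.sum_sub_distrib, Finset.sum_const, card_univ,
          Fintype.card_fin, ← Nat.cast_smul_eq_nsmul ℝ, hPsum]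
        simp
      rw [← Finset.mul_sum, hcross, Finset.sum_const, card_univ, Fintype.card_fin,
        nsmul_eq_mul]
      ring
    have Kg : (δ/2) * ∑ i, ‖xi i r - Y‖^2
        = (δ/2) * ∑ i, ‖xi i r - X'‖^2 + (δ/2) * ((n:ℝ) * ‖X' - Y‖^2) := by
      rw [Kg0]; ring
    have Khper : ∀ i : Fin n, ⟪gradient (f' i) (xi i r), z - xi i r⟫
        = ⟪gradient (f' i) (xi i r) + gradient f Y - gradient (f' i) Y
            + (2*δ) • (xi i r - Y), z - xi i r⟫
          - ⟪gradient f Y - gradient (f' i) Y, z - xi i r⟫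
          - (2*δ) * ⟪xi i r - Y, z - xi i r⟫ := by
      intro i
      rw [inner_add_left, inner_sub_left, inner_add_left, inner_sub_left,
        real_inner_smul_left]
      ring
    have Kh : ∑ i, ⟪gradient (f' i) (xi i r), z - xi i r⟫
        = ∑ i, ⟪gradient (f' i) (xi i r) + gradient f Y - gradient (f' i) Y
            + (2*δ) • (xi i r - Y), z - xi i r⟫
          - ∑ i, ⟪gradient f Y - gradient (f' i) Y, z - xi i r⟫
          - (2*δ) * ∑ i, ⟪xi i r - Y, z - xi i r⟫ := by
      rw [Finset.sum_congr rfl (fun i _ => Khper i), Finset.sum_sub_distrib,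
        Finset.sum_sub_distrib, Finset.mul_sum]
    have Ki : ∑ i, ⟪gradient f Y - gradient (f' i) Y, z - xi i r⟫
        = - ∑ i, ⟪gradient f Y - gradient (f' i) Y, xi i r⟫ := by
      have hper : ∀ i : Fin n, ⟪gradient f Y - gradient (f' i) Y, z - xi i r⟫
          = ⟪gradient f Y - gradient (f' i) Y, z⟫
            - ⟪gradient f Y - gradient (f' i) Y, xi i r⟫ := fun i => inner_sub_right _ _ _
      rw [Finset.sum_congr rfl (fun i _ => hper i), Finset.sum_sub_distrib,
        ← sum_inner, hsumH Y, inner_zero_left, zero_sub]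
    have Kjper : ∀ i : Fin n, -(2*δ) * ⟪xi i r - Y, z - xi i r⟫ + δ*‖z - Y‖^2
        = δ*‖z - xi i r‖^2 + δ*‖xi i r - Y‖^2 := by
      intro i
      have h1 : ‖z - Y‖^2 = ‖z - xi i r‖^2 + 2*⟪z - xi i r, xi i r - Y⟫
          + ‖xi i r - Y‖^2 := by
        rw [show z - Y = (z - xi i r) + (xi i r - Y) by abel, norm_add_sq_real]
      have h2 : ⟪xi i r - Y, z - xi i r⟫ = ⟪z - xi i r, xi i r - Y⟫ :=
        real_inner_comm _ _
      linear_combination δ*h1 - (2*δ)*h2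
    have Kj : -(2*δ) * ∑ i, ⟪xi i r - Y, z - xi i r⟫ + (n:ℝ)*(δ*‖z - Y‖^2)
        = δ * ∑ i, ‖z - xi i r‖^2 + δ * ∑ i, ‖xi i r - Y‖^2 := by
      have h := Finset.sum_congr rfl (fun i (_ : i ∈ univ) => Kjper i)
      simp only [Finset.sum_add_distrib, ← Finset.mul_sum, Finset.sum_const,
        card_univ, Fintype.card_fin, nsmul_eq_mul] at h
      linarith only [h]
    have Kk : -((1/(2*(2*δ))) * ∑ i, ‖gradient (f' i) (xi i r) + gradient f Y
          - gradient (f' i) Y + (2*δ) • (xi i r - Y)‖^2)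
        ≤ ∑ i, ⟪gradient (f' i) (xi i r) + gradient f Y - gradient (f' i) Y
            + (2*δ) • (xi i r - Y), z - xi i r⟫ + ((2*δ)/2) * ∑ i, ‖z - xi i r‖^2 := by
      have h := Finset.sum_le_sum (fun i (_ : i ∈ univ) =>
        quad_lower (gradient (f' i) (xi i r) + gradient f Y - gradient (f' i) Y
          + (2*δ) • (xi i r - Y)) (z - xi i r) (2*δ) (by linarith))
      rw [Finset.sum_add_distrib, ← Finset.mul_sum] at h
      rw [Finset.sum_neg_distrib, ← Finset.mul_sum] at h
      linarith only [h]
    have Kl1 := mul_le_mul_of_nonneg_left haccr (by positivity : (0:ℝ) ≤ 1/(2*(2*δ)))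
    have Kl2 : (1/(2*(2*δ))) * (δ^2 * ∑ i, ‖xi i r - Y‖^2)
        = (δ/4) * ∑ i, ‖xi i r - Y‖^2 := by field_simp; ring
    have KPY : (0:ℝ) ≤ δ * ∑ i, ‖xi i r - Y‖^2 := by positivity
    have KEYs : ∑ i, f' i X' ≤ ∑ i, f' i (xi i r)
        + ∑ i, ⟪gradient (f' i) (xi i r), z - xi i r⟫ + (n:ℝ)*(δ*‖z - Y‖^2) := by
      have Eq1 : ∑ i, ⟪gradient (f' i) (xi i r), z - xi i r⟫ + (n:ℝ)*(δ*‖z - Y‖^2)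
          = ∑ i, ⟪gradient (f' i) (xi i r) + gradient f Y - gradient (f' i) Y
              + (2*δ) • (xi i r - Y), z - xi i r⟫
            + ∑ i, ⟪gradient f Y - gradient (f' i) Y, xi i r⟫
            + δ * ∑ i, ‖z - xi i r‖^2 + δ * ∑ i, ‖xi i r - Y‖^2 := by
        linear_combination Kh + Kj - Ki
      have stepA : ∑ i, f' i X' ≤ ∑ i, f' i (xi i r)
          + ∑ i, ⟪gradient f Y - gradient (f' i) Y, xi i r⟫
          + (1/(2*δ)) * ∑ i, ‖(gradient f X' - gradient (f' i) X')
              - (gradient f Y - gradient (f' i) Y)‖^2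
          + (δ/2) * ∑ i, ‖xi i r - X'‖^2 := by
        linarith only [Ka, Kb, Kc, Kd, Ke]
      have stepB : ∑ i, f' i X' ≤ ∑ i, f' i (xi i r)
          + ∑ i, ⟪gradient f Y - gradient (f' i) Y, xi i r⟫
          + (δ/2) * ∑ i, ‖xi i r - Y‖^2 := by
        linarith only [stepA, Kf, Kg]
      have stepC : -((δ/4) * ∑ i, ‖xi i r - Y‖^2)
          ≤ ∑ i, ⟪gradient (f' i) (xi i r) + gradient f Y - gradient (f' i) Y
              + (2*δ) • (xi i r - Y), z - xi i r⟫ + δ * ∑ i, ‖z - xi i r‖^2 := by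
        linarith only [Kk, Kl1, Kl2]
      linarith only [stepB, stepC, Eq1, KPY]
    have KEYf : f X' ≤ (1/(n:ℝ)) * (∑ i, f' i (xi i r)
        + ∑ i, ⟪gradient (f' i) (xi i r), z - xi i r⟫) + δ*‖z - Y‖^2 := by
      have h1 := mul_le_mul_of_nonneg_left KEYs hcpos.le
      have h2 : (1/(n:ℝ)) * (∑ i, f' i (xi i r)
          + ∑ i, ⟪gradient (f' i) (xi i r), z - xi i r⟫ + (n:ℝ)*(δ*‖z - Y‖^2))
          = (1/(n:ℝ)) * (∑ i, f' i (xi i r)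
          + ∑ i, ⟪gradient (f' i) (xi i r), z - xi i r⟫) + δ*‖z - Y‖^2 := by
        field_simp
      rw [hfval X']
      linarith only [h1, h2]
    -- ---------- assembling ----------
    have I1 := mul_le_mul_of_nonneg_left KEYf hA1pos.le
    have I2 : A1 * (δ*‖z - Y‖^2) = (B0'/2) * ‖V' - V‖^2 := by
      have hcan : A1 * (A1 * (δ*‖z - Y‖^2)) = A1 * ((B0'/2) * ‖V' - V‖^2) := by
        linear_combination δ*hnormzY2 + (‖V' - V‖^2/2)*haeqA1
      exact mul_left_cancel₀ hA1ne hcan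
    have I3per : ∀ i : Fin n, A1 * ⟪gradient (f' i) (xi i r), z - xi i r⟫
        = A0 * ⟪gradient (f' i) (xi i r), X - xi i r⟫
          + aa * ⟪gradient (f' i) (xi i r), V' - xi i r⟫ := by
      intro i
      have h2 := congrArg (fun t => ⟪gradient (f' i) (xi i r), t⟫) (hzi (xi i r))
      simpa [inner_add_right, real_inner_smul_right] using h2
    have I3sum : A1 * ∑ i, ⟪gradient (f' i) (xi i r), z - xi i r⟫
        = A0 * ∑ i, ⟪gradient (f' i) (xi i r), X - xi i r⟫
          + aa * ∑ i, ⟪gradient (f' i) (xi i r), V' - xi i r⟫ := by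
      rw [Finset.mul_sum, Finset.mul_sum, Finset.mul_sum, ← Finset.sum_add_distrib]
      exact Finset.sum_congr rfl fun i _ => I3per i
    have I3 : A1 * ((1/(n:ℝ)) * ∑ i, ⟪gradient (f' i) (xi i r), z - xi i r⟫)
        = A0 * ((1/(n:ℝ)) * ∑ i, ⟪gradient (f' i) (xi i r), X - xi i r⟫)
          + aa * ((1/(n:ℝ)) * ∑ i, ⟪gradient (f' i) (xi i r), V' - xi i r⟫) := by
      linear_combination (1/(n:ℝ)) * I3sum
    have R1 : ∑ i, f' i (xi i r) + ∑ i, ⟪gradient (f' i) (xi i r), X - xi i r⟫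
        ≤ ∑ i, f' i X := by
      have h := Finset.sum_le_sum (fun i (_ : i ∈ univ) => hconv i (xi i r) X)
      rw [Finset.sum_add_distrib, Finset.sum_add_distrib] at h
      have hnn : (0:ℝ) ≤ ∑ i, μ/2 * ‖xi i r - X‖^2 := by positivity
      linarith only [h, hnn]
    have I4 : A0 * ((1/(n:ℝ)) * ∑ i, f' i (xi i r))
        + A0 * ((1/(n:ℝ)) * ∑ i, ⟪gradient (f' i) (xi i r), X - xi i r⟫)
        ≤ A0 * f X := by
      have h := mul_le_mul_of_nonneg_left R1
        (mul_nonneg hA0nn hcpos.le : (0:ℝ) ≤ A0 * (1/(n:ℝ)))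
      rw [hfval X]
      linarith only [h]
    have I5sum : ∑ i, ⟪gradient (f' i) (xi i r), V' - xi i r⟫
        = ∑ i, ⟪gradient (f' i) (xi i r), V'⟫
          - ∑ i, ⟪gradient (f' i) (xi i r), xi i r⟫ := by
      rw [← Finset.sum_sub_distrib]
      exact Finset.sum_congr rfl fun i _ => inner_sub_right _ _ _
    have I5 : aa * ((1/(n:ℝ)) * ∑ i, ⟪gradient (f' i) (xi i r), V' - xi i r⟫)
        = aa * ((1/(n:ℝ)) * ∑ i, ⟪gradient (f' i) (xi i r), V'⟫)
          - aa * ((1/(n:ℝ)) * ∑ i, ⟪gradient (f' i) (xi i r), xi i r⟫) := by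
      linear_combination (aa * (1/(n:ℝ))) * I5sum
    -- G identities
    have G1a : ∑ i, ‖xstar - xi i r‖^2
        = (n:ℝ)*‖w'‖^2 + 2*∑ i, ⟪w', V' - xi i r⟫ + ∑ i, ‖V' - xi i r‖^2 := by
      have hper : ∀ i : Fin n, ‖xstar - xi i r‖^2
          = ‖w'‖^2 + 2*⟪w', V' - xi i r⟫ + ‖V' - xi i r‖^2 := by
        intro i
        rw [show xstar - xi i r = w' + (V' - xi i r) by rw [hw'def]; abel,
          norm_add_sq_real]
      rw [Finset.sum_congr rfl (fun i _ => hper i), Finset.sum_add_distrib,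
        Finset.sum_add_distrib, Finset.sum_const, card_univ, Fintype.card_fin,
        nsmul_eq_mul, ← Finset.mul_sum]
    have G1b : ∑ i, ⟪w', V' - xi i r⟫ = (n:ℝ)*⟪w', V'⟫ - (n:ℝ)*⟪w', X'⟫ := by
      have hsum : ∑ i, (V' - xi i r) = (n:ℝ) • V' - (n:ℝ) • X' := by
        rw [Finset.sum_sub_distrib, Finset.sum_const, card_univ, Fintype.card_fin,
          ← Nat.cast_smul_eq_nsmul ℝ, hPsum]
      rw [← inner_sum, hsum, inner_sub_right, real_inner_smul_right,
        real_inner_smul_right]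
    have G3 : ‖xstar - V‖^2 = ‖w'‖^2 + 2*(⟪w', V'⟫ - ⟪w', V⟫) + ‖V' - V‖^2 := by
      rw [show xstar - V = w' + (V' - V) by rw [hw'def]; abel, norm_add_sq_real,
        inner_sub_right]
    have G4 : ∑ i, ⟪gradient (f' i) (xi i r), xstar⟫
        - ∑ i, ⟪gradient (f' i) (xi i r), V'⟫
        = ⟪w', ∑ i, gradient (f' i) (xi i r)⟫ := by
      have hper : ∀ i : Fin n, ⟪gradient (f' i) (xi i r), xstar⟫
          - ⟪gradient (f' i) (xi i r), V'⟫ = ⟪gradient (f' i) (xi i r), w'⟫ := by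
        intro i; rw [hw'def, inner_sub_right]
      rw [← Finset.sum_sub_distrib, Finset.sum_congr rfl (fun i _ => hper i),
        ← sum_inner, real_inner_comm]
    have G5 : B1' * ⟪w', V'⟫ = B0' * ⟪w', V⟫ + (aa*μ) * ⟪w', X'⟫
        - aa * ((1/(n:ℝ)) * ⟪w', ∑ i, gradient (f' i) (xi i r)⟫) := by
      have h2 := congrArg (fun t => ⟪w', t⟫) hV'vec
      simpa [inner_add_right, inner_sub_right, real_inner_smul_right] using h2
    have I6 : aa * ((1/(n:ℝ)) * ∑ i, ⟪gradient (f' i) (xi i r), V'⟫)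
        + (aa*μ/2) * ((1/(n:ℝ)) * ∑ i, ‖V' - xi i r‖^2)
        + (B0'/2) * ‖V' - V‖^2 + (B1'/2) * ‖w'‖^2
        = aa * ((1/(n:ℝ)) * ∑ i, ⟪gradient (f' i) (xi i r), xstar⟫)
          + (aa*μ/2) * ((1/(n:ℝ)) * ∑ i, ‖xstar - xi i r‖^2)
          + (B0'/2) * ‖xstar - V‖^2 := by
      linear_combination (-(aa*(1/(n:ℝ))))*G4 + (-(aa*μ/2)*(1/(n:ℝ)))*G1a
        + (-(aa*μ)*(1/(n:ℝ)))*G1b + (-(B0'/2))*G3 + (-1)*G5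
        + ((-(aa*μ/2))*‖w'‖^2 + (-(aa*μ))*⟪w', V'⟫ + (aa*μ)*⟪w', X'⟫)*hmul
        + (‖w'‖^2/2 + ⟪w', V'⟫)*hB1eq
    have R2 : ∑ i, ⟪gradient (f' i) (xi i r), xstar - xi i r⟫
        + μ/2 * ∑ i, ‖xi i r - xstar‖^2
        ≤ ∑ i, f' i xstar - ∑ i, f' i (xi i r) := by
      have h := Finset.sum_le_sum (fun i (_ : i ∈ univ) => hconv i (xi i r) xstar)
      simp only [Finset.sum_add_distrib, ← Finset.mul_sum] at h
      linarith only [h]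
    have Qrev : ∑ i, ‖xi i r - xstar‖^2 = ∑ i, ‖xstar - xi i r‖^2 :=
      Finset.sum_congr rfl fun i _ => by rw [norm_sub_rev]
    have Ssplit2 : ∑ i, ⟪gradient (f' i) (xi i r), xstar - xi i r⟫
        = ∑ i, ⟪gradient (f' i) (xi i r), xstar⟫
          - ∑ i, ⟪gradient (f' i) (xi i r), xi i r⟫ := by
      rw [← Finset.sum_sub_distrib]
      exact Finset.sum_congr rfl fun i _ => inner_sub_right _ _ _
    have I7 : aa * ((1/(n:ℝ)) * ∑ i, ⟪gradient (f' i) (xi i r), xstar⟫)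
        - aa * ((1/(n:ℝ)) * ∑ i, ⟪gradient (f' i) (xi i r), xi i r⟫)
        + (aa*μ/2) * ((1/(n:ℝ)) * ∑ i, ‖xstar - xi i r‖^2)
        ≤ aa * f xstar - aa * ((1/(n:ℝ)) * ∑ i, f' i (xi i r)) := by
      have h := mul_le_mul_of_nonneg_left R2
        (mul_nonneg haapos.le hcpos.le : (0:ℝ) ≤ aa * (1/(n:ℝ)))
      have e1 : aa * ((1/(n:ℝ)) * ∑ i, ⟪gradient (f' i) (xi i r), xstar⟫)
          - aa * ((1/(n:ℝ)) * ∑ i, ⟪gradient (f' i) (xi i r), xi i r⟫)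
          + (aa*μ/2) * ((1/(n:ℝ)) * ∑ i, ‖xstar - xi i r‖^2)
          = (aa * (1/(n:ℝ))) * (∑ i, ⟪gradient (f' i) (xi i r), xstar - xi i r⟫
            + μ/2 * ∑ i, ‖xi i r - xstar‖^2) := by
        linear_combination (-(aa * (1/(n:ℝ)))) * Ssplit2
          + ((aa*μ/2) * (1/(n:ℝ))) * Qrev.symm
      have e2 : (aa * (1/(n:ℝ))) * (∑ i, f' i xstar - ∑ i, f' i (xi i r))
          = aa * f xstar - aa * ((1/(n:ℝ)) * ∑ i, f' i (xi i r)) := by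
        rw [hfval xstar]; ring
      linarith only [h, e1, e2]
    have I8 : (0:ℝ) ≤ (aa*μ/2) * ((1/(n:ℝ)) * ∑ i, ‖V' - xi i r‖^2) := by positivity
    -- final assembly
    rw [hA1eq] at I1 I2 I3
    rw [hB1eq] at I6
    rw [hA1eq, hB1eq]
    linarith only [I1, I2, I3, I4, I5, I6, I7, I8]
  -- ============ telescoping the potential ============
  have potential : ∀ r, A r * (f (x r) - f xstar) + B r / 2 * ‖xstar - v r‖^2
      ≤ (1/2) * ‖xstar - x 0‖^2 := by
    intro r
    induction r with
    | zero =>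
      rw [hA0, hB0, hv0]
      linarith only []
    | succ k ih =>
      have h := round k
      have hAk' : A (k+1) * f xstar = A k * f xstar + a (k+1) * f xstar := by
        rw [hArec k]; ring
      linarith only [h, ih, hAk']
  
  -- ============ growth of the A-sequence ============
  intro R hR
  obtain ⟨R', rfl⟩ : ∃ R'', R = R'' + 1 := ⟨R - 1, (Nat.succ_pred_eq_of_pos hR).symm⟩
  have hexp : 2 * (R' + 1) - 2 = 2 * R' := by omega
  rw [hexp]
  set s : ℝ := Real.sqrt (μ / (2 * δ)) with hsdef
  have hs0 : 0 ≤ s := Real.sqrt_nonneg _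
  have hs2 : s^2 = μ / (2*δ) := Real.sq_sqrt (by positivity)
  have hμs : μ = 2*δ*s^2 := by rw [hs2]; field_simp
  have hs8 : Real.sqrt (μ / (8 * δ)) = s/2 := by
    rw [show μ/(8*δ) = (s/2)^2 by rw [div_pow, hs2, div_div]; congr 1; ring]
    exact Real.sqrt_sq (by positivity)
  rw [hs8]
  set gr : ℝ := 1 + s/2 with hgrdef
  have hgr1 : (1:ℝ) ≤ gr := by rw [hgrdef]; linarith
  have hgrpos : (0:ℝ) < gr := by linarith
  have ha1 : a 1 = 1 / (2*δ) := by
    have h := haeq 0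
    rw [hA0, hB0] at h
    have h1 := ha 0
    have h2 : a 1 * (2*δ*a 1 - 1) = 0 := by linear_combination h
    rcases mul_eq_zero.mp h2 with h3 | h3
    · exact absurd h3 (ne_of_gt h1)
    · field_simp; linarith only [h3]
  have hA1val : A 1 = 1/(2*δ) := by rw [hArec 0, hA0, ha1]; ring
  have hstep : ∀ k : ℕ, gr^2 * A (k+1) ≤ A (k+2) := by
    intro k
    set AA := A (k+1) with hAAdef
    set d := a (k+2) with hddef
    have hAApos : 0 < AA := hApos' k
    have hdpos : 0 < d := ha (k+1)
    have h := haeq (k+1)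
    rw [hBA (k+1)] at h
    -- h : 2*δ*d^2 = (AA + d)*(1 + μ*AA)
    have hd2' : μ*((AA+d)*AA) ≤ 2*δ*d^2 := by nlinarith only [h, hAApos, hdpos]
    have hd2 : s^2*((AA+d)*AA) ≤ d^2 := by
      have h4 : 2*δ*(s^2*((AA+d)*AA)) ≤ 2*δ*d^2 := by
        calc 2*δ*(s^2*((AA+d)*AA)) = μ*((AA+d)*AA) := by rw [hμs]; ring
          _ ≤ 2*δ*d^2 := hd2'
      have h5 : (0:ℝ) < 2*δ := by linarith
      exact (mul_le_mul_iff_right₀ h5).mp h4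
    set ρ : ℝ := Real.sqrt (s^2 + 4) with hρdef
    have hρ0 : 0 ≤ ρ := Real.sqrt_nonneg _
    have hρ2 : ρ^2 = s^2 + 4 := Real.sq_sqrt (by positivity)
    have hρ2' : ρ^2 - s^2 = 4 := by linarith
    have hρge2 : 2 ≤ ρ := by nlinarith only [hρ2, sq_nonneg s, hρ0]
    have hρges : s ≤ ρ := by nlinarith only [hρ2, hρ0, hs0]
    have heq : (d - (s*AA/2)*(s+ρ))*(d + (s*AA/2)*(ρ-s))
        = d^2 - s^2*AA*d - s^2*AA^2 := by
      linear_combination (-(s^2*AA^2/4))*hρ2'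
    have hfac : 0 ≤ (d - (s*AA/2)*(s+ρ))*(d + (s*AA/2)*(ρ-s)) := by
      rw [heq]; linarith only [hd2]
    have hsecond : 0 < d + (s*AA/2)*(ρ-s) := by
      have : 0 ≤ (s*AA/2)*(ρ-s) :=
        mul_nonneg (by positivity) (by linarith)
      linarith
    have hfirst : 0 ≤ d - (s*AA/2)*(s+ρ) := by
      by_contra hneg
      push_neg at hneg
      nlinarith only [hfac, hsecond, hneg]
    have hAk2 : A (k+2) = AA + d := hArec (k+1)
    rw [hAk2, hgrdef]
    nlinarith only [hfirst, hρge2, hs0, hAApos,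
      mul_nonneg (mul_nonneg hs0 hAApos.le) (by linarith only [hρge2] : (0:ℝ) ≤ ρ - 2),
      mul_nonneg (mul_nonneg hs0 hs0) hAApos.le]
  have growth : ∀ k : ℕ, (1/(2*δ)) * gr^(2*k) ≤ A (k+1) := by
    intro k
    induction k with
    | zero => rw [Nat.mul_zero, pow_zero, mul_one, hA1val]
    | succ m ih =>
      have h1 := mul_le_mul_of_nonneg_left ih (sq_nonneg gr)
      have h2 : gr^(2*(m+1)) = gr^(2*m) * gr^2 := by
        rw [show 2*(m+1) = 2*m+2 by omega, pow_add]
      calc (1/(2*δ)) * gr^(2*(m+1)) = gr^2 * ((1/(2*δ)) * gr^(2*m)) := by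
            rw [h2]; ring
        _ ≤ gr^2 * A (m+1) := h1
        _ ≤ A (m+1+1) := hstep m
  -- ============ conclusion ============
  have pot := potential (R'+1)
  have hpot2 : A (R'+1) * (f (x (R'+1)) - f xstar) ≤ D^2/2 := by
    have h0 : 0 ≤ B (R'+1)/2 * ‖xstar - v (R'+1)‖^2 :=
      mul_nonneg (by linarith [hBpos (R'+1)]) (sq_nonneg _)
    have h1 : (1/2)*‖xstar - x 0‖^2 = D^2/2 := by
      rw [hD, norm_sub_rev]; ring
    linarith [pot, h0]
  have hGpos : (0:ℝ) < gr^(2*R') := pow_pos hgrpos _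
  rcases le_or_gt (f (x (R'+1)) - f xstar) 0 with hc | hc
  · have h0 : (0:ℝ) ≤ 4*δ*D^2 / gr^(2*R') := div_nonneg (by positivity) hGpos.le
    linarith
  · have h1 := mul_le_mul_of_nonneg_left (growth R') hc.le
    have h2 : (f (x (R'+1)) - f xstar) * A (R'+1) ≤ D^2/2 := by linarith [hpot2]
    have h3 : (f (x (R'+1)) - f xstar) * ((1/(2*δ)) * gr^(2*R')) ≤ D^2/2 := by
      calc (f (x (R'+1)) - f xstar) * ((1/(2*δ)) * gr^(2*R'))
          ≤ (f (x (R'+1)) - f xstar) * A (R'+1) := h1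
        _ ≤ D^2/2 := h2
    have h4 := mul_le_mul_of_nonneg_left h3 (by positivity : (0:ℝ) ≤ 2*δ)
    have e : 2*δ*((f (x (R'+1)) - f xstar) * ((1/(2*δ)) * gr^(2*R')))
        = (f (x (R'+1)) - f xstar) * gr^(2*R') := by
      field_simp
    rw [le_div_iff₀ hGpos]
    have hdd : (0:ℝ) ≤ δ*D^2 := by positivity
    linarith only [h4, e, hdd]
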